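/- The operator A_n, restricted to the antisymmetric subspace Λⁿ(H) of H^{⊗n}, is a unitary (surjective isometry) onto the antisymmetric subspace Λ^{d-n}(H) of H^{⊗(d-n)}, and it annihilates the orthogonal complement of Λⁿ(H). -/

import Mathlib

/-- Antisymmetric subspace of `(ℂ^d)^{⊗m}`, modeled on `EuclideanSpace ℂ (Fin m → Fin d)`. -/
noncomputable def antisymE (d m : ℕ) : Submodule ℂ (EuclideanSpace ℂ (Fin m → Fin d)) where
  carrier := {v | ∀ σ : Equiv.Perm (Fin m),
    (fun x => v (x ∘ σ)) = ((Equiv.Perm.sign σ : ℤ) : ℂ) • (v : (Fin m → Fin d) → ℂ)}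
  add_mem' := by
    intro a b ha hb σ
    funext x
    have := congrFun (ha σ) x
    have := congrFun (hb σ) x
    simp_all [Pi.add_apply]
    ring
  zero_mem' := by intro σ; funext x; simp
  smul_mem' := by
    intro c a ha σ
    funext x
    have := congrFun (ha σ) x
    simp_all [Pi.smul_apply]
    ring

/-- The operator `A_n = (1/√((d-n)! n!)) ∑_{π ∈ S_d} sgn(π)
|e_{π(n+1)},…,e_{π(d)}⟩⟨e_{π(1)},…,e_{π(n)}|` as a matrix. -/
noncomputable def matA (d n : ℕ) (hn : n ≤ d) :
    Matrix (Fin (d - n) → Fin d) (Fin n → Fin d) ℂ :=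
  Matrix.of fun y x => ((Real.sqrt ((d - n).factorial * n.factorial) : ℂ))⁻¹ *
    ∑ π : Equiv.Perm (Fin d), ((Equiv.Perm.sign π : ℤ) : ℂ) *
      (if (∀ k : Fin (d - n), y k = π ⟨n + (k : ℕ), by have := k.isLt; omega⟩) ∧
          (∀ k : Fin n, x k = π (Fin.castLE hn k)) then 1 else 0)

/-- The linear action `v ↦ A_n v` of the operator `A_n`. -/
noncomputable def applyA (d n : ℕ) (hn : n ≤ d) (v : EuclideanSpace ℂ (Fin n → Fin d)) :
    EuclideanSpace ℂ (Fin (d - n) → Fin d) :=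
  WithLp.toLp 2 ((matA d n hn).mulVec v)

open Equiv Equiv.Perm Finset

section helpers
variable {d n : ℕ} (hn : n ≤ d)

/-- head of a permutation of `Fin d`: first `n` values. -/
def hd (π : Perm (Fin d)) : Fin n → Fin d := fun k => π (Fin.castLE hn k)

/-- tail of a permutation of `Fin d`: last `d - n` values. -/
def tl (π : Perm (Fin d)) : Fin (d - n) → Fin d :=
  fun k => π ⟨n + (k : ℕ), by have := k.isLt; omega⟩

def fL : Fin n ≃ {i : Fin d // (i : ℕ) < n} where
  toFun k := ⟨Fin.castLE hn k, k.isLt⟩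
  invFun i := ⟨(i : Fin d), i.2⟩
  left_inv k := rfl
  right_inv i := rfl

def fR : Fin (d - n) ≃ {i : Fin d // n ≤ (i : ℕ)} where
  toFun k := ⟨⟨n + (k : ℕ), by have := k.isLt; omega⟩, by simp⟩
  invFun i := ⟨(i : Fin d) - n, by have := (i : Fin d).isLt; have := i.2; omega⟩
  left_inv k := by ext; simp
  right_inv i := by ext; have := i.2; simp; omega

noncomputable def permL (τ : Perm (Fin n)) : Perm (Fin d) := τ.extendDomain (fL hn)

noncomputable def permR (σ : Perm (Fin (d - n))) : Perm (Fin d) := σ.extendDomain (fR hn)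

lemma permL_lo (τ : Perm (Fin n)) (k : Fin n) :
    permL hn τ (Fin.castLE hn k) = Fin.castLE hn (τ k) := by
  have h : (Fin.castLE hn k : Fin d) = ((fL hn k : {i : Fin d // (i:ℕ) < n}) : Fin d) := rfl
  rw [permL, h, Perm.extendDomain_apply_image]
  rfl

lemma permL_hi (τ : Perm (Fin n)) (i : Fin d) (h : n ≤ (i : ℕ)) :
    permL hn τ i = i := by
  rw [permL, Perm.extendDomain_apply_not_subtype]
  omega

lemma permR_hi (σ : Perm (Fin (d - n))) (k : Fin (d - n)) :
    permR hn σ ⟨n + (k : ℕ), by have := k.isLt; omega⟩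
      = ⟨n + (σ k : ℕ), by have := (σ k).isLt; omega⟩ := by
  have h : (⟨n + (k : ℕ), by have := k.isLt; omega⟩ : Fin d)
      = ((fR hn k : {i : Fin d // n ≤ (i:ℕ)}) : Fin d) := rfl
  rw [permR, h, Perm.extendDomain_apply_image]
  rfl

lemma permR_lo (σ : Perm (Fin (d - n))) (i : Fin d) (h : (i : ℕ) < n) :
    permR hn σ i = i := by
  rw [permR, Perm.extendDomain_apply_not_subtype]
  omega

@[simp] lemma sign_permL (τ : Perm (Fin n)) : sign (permL hn τ) = sign τ :=
  Perm.sign_extendDomain τ (fL hn)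

@[simp] lemma sign_permR (σ : Perm (Fin (d - n))) : sign (permR hn σ) = sign σ :=
  Perm.sign_extendDomain σ (fR hn)

lemma hd_mul_permL (π : Perm (Fin d)) (τ : Perm (Fin n)) :
    hd hn (π * permL hn τ) = hd hn π ∘ τ := by
  funext k; simp [hd, Perm.mul_apply, permL_lo hn τ k]

lemma tl_mul_permL (π : Perm (Fin d)) (τ : Perm (Fin n)) :
    tl hn (π * permL hn τ) = tl hn π := by
  funext k
  show π (permL hn τ _) = _
  rw [permL_hi hn τ _ (Nat.le_add_right n k)]; rfl

lemma hd_mul_permR (π : Perm (Fin d)) (σ : Perm (Fin (d - n))) :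
    hd hn (π * permR hn σ) = hd hn π := by
  funext k
  show π (permR hn σ _) = _
  rw [permR_lo hn σ _ (by simp)]; rfl

lemma tl_mul_permR (π : Perm (Fin d)) (σ : Perm (Fin (d - n))) :
    tl hn (π * permR hn σ) = tl hn π ∘ σ := by
  funext k; simp [tl, Perm.mul_apply, permR_hi hn σ k]

end helpers

section classify
variable {d n : ℕ} (hn : n ≤ d)

lemma exists_permL (g : Perm (Fin d)) (hg : ∀ i : Fin d, n ≤ (i : ℕ) → g i = i) :
    ∃ τ : Perm (Fin n), g = permL hn τ := by
  have hiff : ∀ i : Fin d, (i : ℕ) < n ↔ ((g i : Fin d) : ℕ) < n := by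
    intro i
    constructor
    · intro hi
      by_contra hge
      have h1 : g (g i) = g i := hg (g i) (le_of_not_gt hge)
      have h2 : g i = i := g.injective h1
      rw [h2] at hge; omega
    · intro hgi
      by_contra hge
      have := hg i (le_of_not_gt hge)
      rw [this] at hgi; omega
  refine ⟨(fL hn).symm.permCongr (g.subtypePerm (fun i => (hiff i).symm)), ?_⟩
  ext i
  by_cases hi : (i : ℕ) < n
  · have h : (i : Fin d) = (((fL hn) ⟨i, hi⟩ : {j : Fin d // (j:ℕ) < n}) : Fin d) := rfl
    rw [permL, h, Perm.extendDomain_apply_image]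
    simp [Equiv.permCongr_apply, fL]
  · rw [permL_hi hn _ i (le_of_not_gt hi), hg i (le_of_not_gt hi)]

lemma exists_permR (g : Perm (Fin d)) (hg : ∀ i : Fin d, (i : ℕ) < n → g i = i) :
    ∃ σ : Perm (Fin (d - n)), g = permR hn σ := by
  have hiff : ∀ i : Fin d, n ≤ (i : ℕ) ↔ n ≤ ((g i : Fin d) : ℕ) := by
    intro i
    constructor
    · intro hi
      by_contra hge
      have h1 : g (g i) = g i := hg (g i) (lt_of_not_ge hge)
      have h2 : g i = i := g.injective h1
      rw [h2] at hge; omega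
    · intro hgi
      by_contra hge
      have := hg i (lt_of_not_ge hge)
      rw [this] at hgi; omega
  refine ⟨(fR hn).symm.permCongr (g.subtypePerm (fun i => (hiff i).symm)), ?_⟩
  ext i
  by_cases hi : n ≤ (i : ℕ)
  · have h : (i : Fin d) = (((fR hn) ((fR hn).symm ⟨i, hi⟩) : {j : Fin d // n ≤ (j:ℕ)}) : Fin d) := by
      simp
    rw [permR, h, Perm.extendDomain_apply_image]
    simp [Equiv.permCongr_apply]
  · rw [permR_lo hn _ i (lt_of_not_ge hi), hg i (lt_of_not_ge hi)]

end classify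

section extend
variable {d n : ℕ} (hn : n ≤ d)

noncomputable def extHd (x : Fin n → Fin d) (hx : Function.Injective x) : Perm (Fin d) :=
  (((Equiv.sumCompl (fun i : Fin d => (i : ℕ) < n)).symm.trans
    (Equiv.sumCongr ((fL hn).symm.trans (Equiv.ofInjective x hx))
      (Fintype.equivOfCardEq (by
        rw [Fintype.card_subtype_compl, Fintype.card_subtype_compl,
          Fintype.card_congr (fL hn).symm, Fintype.card_congr (Equiv.ofInjective x hx).symm])))).trans
    (Equiv.sumCompl (fun i : Fin d => i ∈ Set.range x)))

lemma exists_hd_eq (x : Fin n → Fin d) (hx : Function.Injective x) :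
    ∃ π : Perm (Fin d), hd hn π = x := by
  refine ⟨extHd hn x hx, funext fun k => ?_⟩
  show (extHd hn x hx) (Fin.castLE hn k) = x k
  rw [extHd]
  simp only [Equiv.trans_apply, Equiv.sumCompl_symm_apply_of_pos (by simpa using k.isLt :
    ((Fin.castLE hn k : Fin d) : ℕ) < n), Equiv.sumCongr_apply, Sum.map_inl,
    Equiv.sumCompl_apply_inl]
  simp [fL, Equiv.ofInjective_apply]

noncomputable def extTl (y : Fin (d - n) → Fin d) (hy : Function.Injective y) : Perm (Fin d) :=
  (((Equiv.sumCompl (fun i : Fin d => n ≤ (i : ℕ))).symm.trans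
    (Equiv.sumCongr ((fR hn).symm.trans (Equiv.ofInjective y hy))
      (Fintype.equivOfCardEq (by
        rw [Fintype.card_subtype_compl, Fintype.card_subtype_compl,
          Fintype.card_congr (fR hn).symm, Fintype.card_congr (Equiv.ofInjective y hy).symm])))).trans
    (Equiv.sumCompl (fun i : Fin d => i ∈ Set.range y)))

lemma exists_tl_eq (y : Fin (d - n) → Fin d) (hy : Function.Injective y) :
    ∃ π : Perm (Fin d), tl hn π = y := by
  refine ⟨extTl hn y hy, funext fun k => ?_⟩
  show (extTl hn y hy) ⟨n + (k : ℕ), _⟩ = y k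
  rw [extTl]
  simp only [Equiv.trans_apply, Equiv.sumCompl_symm_apply_of_pos
    (by simp : n ≤ ((⟨n + (k : ℕ), by have := k.isLt; omega⟩ : Fin d) : ℕ)),
    Equiv.sumCongr_apply, Sum.map_inl, Equiv.sumCompl_apply_inl]
  have h1 : (fR hn).symm ⟨⟨n + (k : ℕ), by have := k.isLt; omega⟩, by simp⟩ = k := by
    apply (fR hn).injective; simp [fR]
  simp [Equiv.trans_apply, h1, Equiv.ofInjective_apply]

end extend

section fiber
variable {d n : ℕ} (hn : n ≤ d)

lemma permL_injective : Function.Injective (permL hn (d := d) (n := n)) := by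
  intro τ τ' h
  ext k
  have := congrArg (fun g : Perm (Fin d) => g (Fin.castLE hn k)) h
  simp only [permL_lo] at this
  exact congrArg Fin.val (Fin.castLE_injective hn this)

lemma permR_injective : Function.Injective (permR hn (d := d) (n := n)) := by
  intro σ σ' h
  ext k
  have := congrArg (fun g : Perm (Fin d) => g ⟨n + (k : ℕ), by have := k.isLt; omega⟩) h
  simp only [permR_hi] at this
  have := congrArg Fin.val this
  simpa using this

lemma fiberL (π : Perm (Fin d)) (G : Perm (Fin d) → ℂ) :
    ∑ π' : Equiv.Perm (Fin d), (if tl hn π = tl hn π' then G π' else 0)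
      = ∑ τ : Equiv.Perm (Fin n), G (π * permL hn τ) := by
  rw [← Finset.sum_filter]
  refine (Finset.sum_bij (fun (τ : Perm (Fin n)) _ => π * permL hn τ) ?_ ?_ ?_ ?_).symm
  · intro τ _
    simp [tl_mul_permL]
  · intro τ _ τ' _ h
    exact permL_injective hn (mul_left_cancel h)
  · intro π' hπ'
    simp only [Finset.mem_filter, Finset.mem_univ, true_and] at hπ'
    have hg : ∀ i : Fin d, n ≤ (i : ℕ) → (π⁻¹ * π') i = i := by
      intro i hi
      have hieq : i = ⟨n + ((i : ℕ) - n), by have := i.isLt; omega⟩ := by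
        apply Fin.ext; simp; omega
      have := congrFun hπ' ⟨(i : ℕ) - n, by have := i.isLt; omega⟩
      simp only [tl] at this
      rw [Perm.mul_apply, hieq, ← this]; exact π.symm_apply_apply _
    obtain ⟨τ, hτ⟩ := exists_permL hn _ hg
    exact ⟨τ, Finset.mem_univ τ, by show π * permL hn τ = π'; rw [← hτ, mul_inv_cancel_left]⟩
  · intro τ _
    rfl

lemma fiberR (π : Perm (Fin d)) (G : Perm (Fin d) → ℂ) :
    ∑ π' : Equiv.Perm (Fin d), (if hd hn π = hd hn π' then G π' else 0)
      = ∑ σ : Equiv.Perm (Fin (d - n)), G (π * permR hn σ) := by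
  rw [← Finset.sum_filter]
  refine (Finset.sum_bij (fun (σ : Perm (Fin (d - n))) _ => π * permR hn σ) ?_ ?_ ?_ ?_).symm
  · intro σ _
    simp [hd_mul_permR]
  · intro σ _ σ' _ h
    exact permR_injective hn (mul_left_cancel h)
  · intro π' hπ'
    simp only [Finset.mem_filter, Finset.mem_univ, true_and] at hπ'
    have hg : ∀ i : Fin d, (i : ℕ) < n → (π⁻¹ * π') i = i := by
      intro i hi
      have hieq : i = Fin.castLE hn ⟨(i : ℕ), hi⟩ := by apply Fin.ext; simp
      have := congrFun hπ' ⟨(i : ℕ), hi⟩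
      simp only [hd] at this
      rw [Perm.mul_apply, hieq, ← this]; exact π.symm_apply_apply _
    obtain ⟨σ, hσ⟩ := exists_permR hn _ hg
    exact ⟨σ, Finset.mem_univ σ, by show π * permR hn σ = π'; rw [← hσ, mul_inv_cancel_left]⟩
  · intro σ _
    rfl

lemma count_hd (x : Fin n → Fin d) (hx : Function.Injective x) :
    ∑ π : Equiv.Perm (Fin d), (if x = hd hn π then (1 : ℂ) else 0)
      = ((d - n).factorial : ℂ) := by
  obtain ⟨π₀, hπ₀⟩ := exists_hd_eq hn x hx
  subst hπ₀
  rw [fiberR hn π₀ (fun _ => (1 : ℂ))]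
  simp [Finset.card_univ, Fintype.card_perm]

lemma count_tl (y : Fin (d - n) → Fin d) (hy : Function.Injective y) :
    ∑ π : Equiv.Perm (Fin d), (if y = tl hn π then (1 : ℂ) else 0)
      = (n.factorial : ℂ) := by
  obtain ⟨π₀, hπ₀⟩ := exists_tl_eq hn y hy
  subst hπ₀
  rw [fiberL hn π₀ (fun _ => (1 : ℂ))]
  simp [Finset.card_univ, Fintype.card_perm]

end fiber


section bridge
variable {d n : ℕ} (hn : n ≤ d)

noncomputable def sgn (π : Perm (Fin d)) : ℂ := ((Equiv.Perm.sign π : ℤ) : ℂ)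

lemma sgn_sq (π : Perm (Fin d)) : sgn π * sgn π = 1 := by
  rcases Int.units_eq_one_or (Equiv.Perm.sign π) with h | h <;> simp [sgn, h]

lemma sgn_mul (π π' : Perm (Fin d)) : sgn (π * π') = sgn π * sgn π' := by
  simp [sgn]

lemma matA_apply (y : Fin (d - n) → Fin d) (x : Fin n → Fin d) :
    matA d n hn y x = ((Real.sqrt ((d - n).factorial * n.factorial) : ℂ))⁻¹ *
      ∑ π : Equiv.Perm (Fin d), sgn π * (if (y = tl hn π ∧ x = hd hn π) then 1 else 0) := by
  rw [matA, Matrix.of_apply]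
  congr 1
  apply Finset.sum_congr rfl
  intro π _
  congr 1
  apply if_congr _ rfl rfl
  rw [funext_iff (f := y), funext_iff (f := x)]
  exact Iff.rfl

lemma applyA_apply (v : EuclideanSpace ℂ (Fin n → Fin d)) (y : Fin (d - n) → Fin d) :
    applyA d n hn v y = ((Real.sqrt ((d - n).factorial * n.factorial) : ℂ))⁻¹ *
      ∑ π : Equiv.Perm (Fin d), sgn π * (if y = tl hn π then v (hd hn π) else 0) := by
  have h0 : applyA d n hn v y = ∑ x : Fin n → Fin d, matA d n hn y x * v x := rfl
  rw [h0]
  have h1 : ∀ x : Fin n → Fin d, matA d n hn y x * v x =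
      ((Real.sqrt ((d - n).factorial * n.factorial) : ℂ))⁻¹ *
      ∑ π : Equiv.Perm (Fin d), sgn π * (if (y = tl hn π ∧ x = hd hn π) then v x else 0) := by
    intro x
    rw [matA_apply hn y x, mul_assoc, Finset.sum_mul]
    congr 1
    apply Finset.sum_congr rfl
    intro π _
    rw [mul_assoc, ite_mul, one_mul, zero_mul]
  simp only [h1]
  rw [← Finset.mul_sum]
  congr 1
  rw [Finset.sum_comm]
  apply Finset.sum_congr rfl
  intro π _
  rw [← Finset.mul_sum]
  congr 1
  by_cases h : y = tl hn π
  · simp only [h, true_and, if_true]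
    exact Fintype.sum_ite_eq' (hd hn π) v
  · simp [h]

end bridge

section misc
variable {d n : ℕ} (hn : n ≤ d)

lemma mem_antisymE {m : ℕ} {v : EuclideanSpace ℂ (Fin m → Fin d)} :
    v ∈ antisymE d m ↔ ∀ σ : Equiv.Perm (Fin m),
      (fun x => v (x ∘ σ)) = ((Equiv.Perm.sign σ : ℤ) : ℂ) • (v : (Fin m → Fin d) → ℂ) :=
  Iff.rfl

noncomputable def sgn' {m : ℕ} (τ : Perm (Fin m)) : ℂ := ((Equiv.Perm.sign τ : ℤ) : ℂ)

lemma sgn'_sq {m : ℕ} (τ : Perm (Fin m)) : sgn' τ * sgn' τ = 1 := by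
  rcases Int.units_eq_one_or (Equiv.Perm.sign τ) with h | h <;> simp [sgn', h]

lemma antisym_vanish {m : ℕ} {v : EuclideanSpace ℂ (Fin m → Fin d)}
    (hv : v ∈ antisymE d m) {x : Fin m → Fin d} (hx : ¬ Function.Injective x) : v x = 0 := by
  rw [Function.Injective] at hx
  push_neg at hx
  obtain ⟨i, j, hxij, hij⟩ := hx
  have hcomp : x ∘ (Equiv.swap i j) = x := by
    funext k
    rcases eq_or_ne k i with rfl | hki
    · simp [Equiv.swap_apply_left, hxij]
    rcases eq_or_ne k j with rfl | hkj
    · simp [Equiv.swap_apply_right, hxij]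
    · simp [Equiv.swap_apply_of_ne_of_ne hki hkj]
  have h1 := congrFun (hv (Equiv.swap i j)) x
  rw [hcomp] at h1
  simp only [Equiv.Perm.sign_swap hij, PiLp.smul_apply, Pi.smul_apply, smul_eq_mul] at h1
  push_cast at h1
  linear_combination h1 / 2

end misc

section reindex
variable {d n : ℕ} (hn : n ≤ d)

lemma comp_cancel {α : Type*} {m : ℕ} (f g : Fin m → α) (σ : Perm (Fin m)) :
    f ∘ σ = g ∘ σ ↔ f = g := by
  constructor
  · intro h
    funext k
    have := congrFun h (σ⁻¹ k)
    simpa using this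
  · intro h; rw [h]

lemma sq_helper (s a z : ℂ) (h : s * s = 1) : a * z = s * (a * s * z) := by
  calc a * z = (s * s) * (a * z) := by rw [h, one_mul]
    _ = s * (a * s * z) := by ring

/-- Row antisymmetry of `applyA`. -/
lemma applyA_comp_row (v : EuclideanSpace ℂ (Fin n → Fin d)) (σ : Perm (Fin (d - n)))
    (y : Fin (d - n) → Fin d) :
    applyA d n hn v (y ∘ σ) = sgn' σ * applyA d n hn v y := by
  have key : ∑ π : Equiv.Perm (Fin d), sgn π * (if y ∘ σ = tl hn π then v (hd hn π) else 0)
      = sgn' σ * ∑ π : Equiv.Perm (Fin d), sgn π * (if y = tl hn π then v (hd hn π) else 0) := by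
    rw [Finset.mul_sum]
    refine Fintype.sum_equiv (Equiv.mulRight (permR hn (σ⁻¹))) _ _ (fun π => ?_)
    simp only [Equiv.coe_mulRight]
    simp only [tl_mul_permR, hd_mul_permR]
    have hs : sgn (π * permR hn (σ⁻¹)) = sgn π * sgn' σ := by
      simp [sgn, sgn', sign_permR]
    rw [hs]
    have hc : (y ∘ σ = tl hn π) ↔ (y = tl hn π ∘ (σ⁻¹ : Perm (Fin (d-n)))) := by
      constructor
      · intro h; funext k; have := congrFun h ((σ⁻¹ : Perm (Fin (d-n))) k); simpa using this
      · intro h; funext k; have := congrFun h (σ k); simpa using this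
    rw [if_congr hc rfl rfl]
    exact sq_helper (sgn' σ) (sgn π) _ (sgn'_sq σ)
  rw [applyA_apply, applyA_apply, key]
  ring

/-- Column antisymmetry of `matA`. -/
lemma matA_comp_col (y : Fin (d - n) → Fin d) (x : Fin n → Fin d) (τ : Perm (Fin n)) :
    matA d n hn y (x ∘ τ) = sgn' τ * matA d n hn y x := by
  have key : ∑ π : Equiv.Perm (Fin d), sgn π * (if (y = tl hn π ∧ x ∘ τ = hd hn π) then (1:ℂ) else 0)
      = sgn' τ * ∑ π : Equiv.Perm (Fin d), sgn π * (if (y = tl hn π ∧ x = hd hn π) then (1:ℂ) else 0) := by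
    rw [Finset.mul_sum]
    refine Fintype.sum_equiv (Equiv.mulRight (permL hn (τ⁻¹))) _ _ (fun π => ?_)
    simp only [Equiv.coe_mulRight]
    simp only [tl_mul_permL, hd_mul_permL]
    have hs : sgn (π * permL hn (τ⁻¹)) = sgn π * sgn' τ := by
      simp [sgn, sgn', sign_permL]
    rw [hs]
    have hc : (y = tl hn π ∧ x ∘ τ = hd hn π) ↔
        (y = tl hn π ∧ x = hd hn π ∘ (τ⁻¹ : Perm (Fin n))) := by
      refine and_congr Iff.rfl ?_
      constructor
      · intro h; funext k; have := congrFun h ((τ⁻¹ : Perm (Fin n)) k); simpa using this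
      · intro h; funext k; have := congrFun h (τ k); simpa using this
    rw [if_congr hc rfl rfl]
    exact sq_helper (sgn' τ) (sgn π) _ (sgn'_sq τ)
  rw [matA_apply, matA_apply, key]
  ring

end reindex

section compute
variable {d n : ℕ} (hn : n ≤ d)

noncomputable def cc (d n : ℕ) : ℂ := ((Real.sqrt ((d - n).factorial * n.factorial) : ℝ) : ℂ)

lemma cc_mul_cc : cc d n * cc d n = ((d - n).factorial : ℂ) * (n.factorial : ℂ) := by
  rw [cc, ← Complex.ofReal_mul, Real.mul_self_sqrt (by positivity)]
  push_cast
  ring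

lemma cc_helper : (cc d n)⁻¹ * (cc d n)⁻¹ * (((n.factorial : ℂ)) * (((d - n).factorial : ℂ))) = 1 := by
  rw [← mul_inv, cc_mul_cc]
  have h1 : ((d - n).factorial : ℂ) ≠ 0 := Nat.cast_ne_zero.mpr (Nat.factorial_ne_zero _)
  have h2 : ((n.factorial : ℂ)) ≠ 0 := Nat.cast_ne_zero.mpr (Nat.factorial_ne_zero _)
  field_simp

lemma applyA_apply' (v : EuclideanSpace ℂ (Fin n → Fin d)) (y : Fin (d - n) → Fin d) :
    applyA d n hn v y = (cc d n)⁻¹ *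
      ∑ π : Equiv.Perm (Fin d), sgn π * (if y = tl hn π then v (hd hn π) else 0) :=
  applyA_apply hn v y

lemma sum_delta_mul {α : Type*} [Fintype α] [DecidableEq α] (a b : α) (A B : ℂ) :
    ∑ y : α, (if y = a then A else 0) * (if y = b then B else 0) = if a = b then A * B else 0 := by
  simp only [ite_mul, zero_mul]
  rw [Fintype.sum_ite_eq' a (fun y => A * if y = b then B else 0)]
  by_cases h : a = b <;> simp [h]

lemma sq_helper2 (s t A B : ℂ) (hs : s * s = 1) (ht : t * t = 1) :
    (s * A) * ((s * t) * (t * B)) = A * B := by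
  calc (s * A) * ((s * t) * (t * B)) = (s * s) * ((t * t) * (A * B)) := by ring
    _ = A * B := by rw [hs, ht]; ring

lemma sq_helper3 (t a B : ℂ) (ht : t * t = 1) : (a * t) * (t * B) = a * B := by
  calc (a * t) * (t * B) = (t * t) * (a * B) := by ring
    _ = a * B := by rw [ht, one_mul]

lemma main_norm_sum (v : EuclideanSpace ℂ (Fin n → Fin d)) (hv : v ∈ antisymE d n) :
    ∑ y : Fin (d - n) → Fin d, (starRingEnd ℂ) (applyA d n hn v y) * applyA d n hn v y
      = ∑ x : Fin n → Fin d, (starRingEnd ℂ) (v x) * v x := by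
  classical
  have hconj : ∀ y : Fin (d - n) → Fin d, (starRingEnd ℂ) (applyA d n hn v y)
      = (cc d n)⁻¹ * ∑ π : Equiv.Perm (Fin d),
          sgn π * (if y = tl hn π then (starRingEnd ℂ) (v (hd hn π)) else 0) := by
    intro y
    rw [applyA_apply' hn v y, map_mul, map_inv₀]
    congr 1
    · rw [cc, Complex.conj_ofReal]
    · rw [map_sum]
      refine Finset.sum_congr rfl (fun π _ => ?_)
      rw [map_mul, apply_ite (starRingEnd ℂ), map_zero]
      congr 1
      simp [sgn]
  calc ∑ y : Fin (d - n) → Fin d, (starRingEnd ℂ) (applyA d n hn v y) * applyA d n hn v y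
      = (cc d n)⁻¹ * (cc d n)⁻¹ * ∑ y : Fin (d - n) → Fin d,
          ((∑ π : Equiv.Perm (Fin d),
              sgn π * (if y = tl hn π then (starRingEnd ℂ) (v (hd hn π)) else 0)) *
           (∑ π : Equiv.Perm (Fin d), sgn π * (if y = tl hn π then v (hd hn π) else 0))) := by
        rw [Finset.mul_sum]
        refine Finset.sum_congr rfl (fun y _ => ?_)
        rw [hconj y, applyA_apply' hn v y]
        ring
    _ = (cc d n)⁻¹ * (cc d n)⁻¹ * ∑ π : Equiv.Perm (Fin d), ∑ π' : Equiv.Perm (Fin d),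
          ∑ y : Fin (d - n) → Fin d,
            (if y = tl hn π then sgn π * (starRingEnd ℂ) (v (hd hn π)) else 0) *
            (if y = tl hn π' then sgn π' * v (hd hn π') else 0) := by
        congr 1
        calc ∑ y : Fin (d - n) → Fin d,
              ((∑ π : Equiv.Perm (Fin d),
                  sgn π * (if y = tl hn π then (starRingEnd ℂ) (v (hd hn π)) else 0)) *
               (∑ π : Equiv.Perm (Fin d), sgn π * (if y = tl hn π then v (hd hn π) else 0)))
            = ∑ y : Fin (d - n) → Fin d, ∑ π : Equiv.Perm (Fin d), ∑ π' : Equiv.Perm (Fin d),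
              (if y = tl hn π then sgn π * (starRingEnd ℂ) (v (hd hn π)) else 0) *
              (if y = tl hn π' then sgn π' * v (hd hn π') else 0) := by
              refine Finset.sum_congr rfl (fun y _ => ?_)
              rw [Finset.sum_mul_sum]
              refine Finset.sum_congr rfl (fun π _ => Finset.sum_congr rfl (fun π' _ => ?_))
              rw [mul_ite, mul_zero, mul_ite, mul_zero]
          _ = ∑ π : Equiv.Perm (Fin d), ∑ y : Fin (d - n) → Fin d, ∑ π' : Equiv.Perm (Fin d),
              (if y = tl hn π then sgn π * (starRingEnd ℂ) (v (hd hn π)) else 0) *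
              (if y = tl hn π' then sgn π' * v (hd hn π') else 0) := Finset.sum_comm
          _ = ∑ π : Equiv.Perm (Fin d), ∑ π' : Equiv.Perm (Fin d), ∑ y : Fin (d - n) → Fin d,
              (if y = tl hn π then sgn π * (starRingEnd ℂ) (v (hd hn π)) else 0) *
              (if y = tl hn π' then sgn π' * v (hd hn π') else 0) :=
              Finset.sum_congr rfl (fun π _ => Finset.sum_comm)
    _ = (cc d n)⁻¹ * (cc d n)⁻¹ * ∑ π : Equiv.Perm (Fin d), ∑ π' : Equiv.Perm (Fin d),
          (if tl hn π = tl hn π' then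
            (sgn π * (starRingEnd ℂ) (v (hd hn π))) * (sgn π' * v (hd hn π')) else 0) := by
        congr 1
        refine Finset.sum_congr rfl (fun π _ => Finset.sum_congr rfl (fun π' _ => ?_))
        exact sum_delta_mul _ _ _ _
    _ = (cc d n)⁻¹ * (cc d n)⁻¹ * ∑ π : Equiv.Perm (Fin d), ∑ τ : Equiv.Perm (Fin n),
          (sgn π * (starRingEnd ℂ) (v (hd hn π))) *
            (sgn (π * permL hn τ) * v (hd hn (π * permL hn τ))) := by
        congr 1
        refine Finset.sum_congr rfl (fun π _ => ?_)
        exact fiberL hn π (fun π' => (sgn π * (starRingEnd ℂ) (v (hd hn π))) * (sgn π' * v (hd hn π')))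
    _ = (cc d n)⁻¹ * (cc d n)⁻¹ * ∑ π : Equiv.Perm (Fin d), ∑ τ : Equiv.Perm (Fin n),
          (starRingEnd ℂ) (v (hd hn π)) * v (hd hn π) := by
        congr 1
        refine Finset.sum_congr rfl (fun π _ => Finset.sum_congr rfl (fun τ _ => ?_))
        rw [hd_mul_permL]
        have hval : v (hd hn π ∘ τ) = sgn' τ * v (hd hn π) := by
          have := congrFun (hv τ) (hd hn π)
          simpa [PiLp.smul_apply, smul_eq_mul, sgn'] using this
        have hsg : sgn (π * permL hn τ) = sgn π * sgn' τ := by simp [sgn, sgn', sign_permL]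
        rw [hval, hsg]
        exact sq_helper2 (sgn π) (sgn' τ) _ _ (sgn_sq π) (sgn'_sq τ)
    _ = (cc d n)⁻¹ * (cc d n)⁻¹ * ((n.factorial : ℂ) * ∑ π : Equiv.Perm (Fin d),
          (starRingEnd ℂ) (v (hd hn π)) * v (hd hn π)) := by
        congr 1
        rw [Finset.mul_sum]
        refine Finset.sum_congr rfl (fun π _ => ?_)
        rw [Finset.sum_const, Finset.card_univ, Fintype.card_perm, Fintype.card_fin, nsmul_eq_mul]
    _ = (cc d n)⁻¹ * (cc d n)⁻¹ * ((n.factorial : ℂ) * ∑ x : Fin n → Fin d,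
          ((starRingEnd ℂ) (v x) * v x) * ∑ π : Equiv.Perm (Fin d), (if x = hd hn π then (1:ℂ) else 0)) := by
        congr 2
        calc ∑ π : Equiv.Perm (Fin d), (starRingEnd ℂ) (v (hd hn π)) * v (hd hn π)
            = ∑ π : Equiv.Perm (Fin d), ∑ x : Fin n → Fin d,
                (if x = hd hn π then (starRingEnd ℂ) (v x) * v x else 0) := by
              refine Finset.sum_congr rfl (fun π _ => ?_)
              exact (Fintype.sum_ite_eq' (hd hn π) (fun x => (starRingEnd ℂ) (v x) * v x)).symm
          _ = ∑ x : Fin n → Fin d, ∑ π : Equiv.Perm (Fin d),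
                (if x = hd hn π then (starRingEnd ℂ) (v x) * v x else 0) := Finset.sum_comm
          _ = ∑ x : Fin n → Fin d,
                ((starRingEnd ℂ) (v x) * v x) * ∑ π : Equiv.Perm (Fin d), (if x = hd hn π then (1:ℂ) else 0) := by
              refine Finset.sum_congr rfl (fun x _ => ?_)
              rw [Finset.mul_sum]
              refine Finset.sum_congr rfl (fun π _ => ?_)
              by_cases h : x = hd hn π <;> simp [h]
    _ = (cc d n)⁻¹ * (cc d n)⁻¹ * ((n.factorial : ℂ) * (((d - n).factorial : ℂ) *
          ∑ x : Fin n → Fin d, (starRingEnd ℂ) (v x) * v x)) := by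
        congr 2
        rw [Finset.mul_sum]
        refine Finset.sum_congr rfl (fun x _ => ?_)
        by_cases hx : Function.Injective x
        · rw [count_hd hn x hx]
          ring
        · rw [antisym_vanish hv hx]
          simp
    _ = ∑ x : Fin n → Fin d, (starRingEnd ℂ) (v x) * v x := by
        have h1 := cc_helper (d := d) (n := n)
        calc (cc d n)⁻¹ * (cc d n)⁻¹ * ((n.factorial : ℂ) * (((d - n).factorial : ℂ) *
              ∑ x : Fin n → Fin d, (starRingEnd ℂ) (v x) * v x))
            = ((cc d n)⁻¹ * (cc d n)⁻¹ * ((n.factorial : ℂ) * ((d - n).factorial : ℂ))) *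
              ∑ x : Fin n → Fin d, (starRingEnd ℂ) (v x) * v x := by ring
          _ = _ := by rw [h1, one_mul]

end compute

section surj
variable {d n : ℕ} (hn : n ≤ d)

noncomputable def preim (w : EuclideanSpace ℂ (Fin (d - n) → Fin d)) :
    EuclideanSpace ℂ (Fin n → Fin d) :=
  WithLp.toLp 2 (fun x => (cc d n)⁻¹ * ∑ π : Equiv.Perm (Fin d), sgn π * (if x = hd hn π then w (tl hn π) else 0))

lemma preim_apply (w : EuclideanSpace ℂ (Fin (d - n) → Fin d)) (x : Fin n → Fin d) :
    preim hn w x = (cc d n)⁻¹ *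
      ∑ π : Equiv.Perm (Fin d), sgn π * (if x = hd hn π then w (tl hn π) else 0) := rfl

lemma preim_mem (w : EuclideanSpace ℂ (Fin (d - n) → Fin d)) :
    preim hn w ∈ antisymE d n := by
  rw [mem_antisymE]
  intro τ
  funext x
  simp only [PiLp.smul_apply, Pi.smul_apply, smul_eq_mul]
  show preim hn w (x ∘ τ) = ((Equiv.Perm.sign τ : ℤ) : ℂ) * (preim hn w) x
  rw [preim_apply, preim_apply]
  have key : ∑ π : Equiv.Perm (Fin d), sgn π * (if x ∘ τ = hd hn π then w (tl hn π) else 0)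
      = sgn' τ * ∑ π : Equiv.Perm (Fin d), sgn π * (if x = hd hn π then w (tl hn π) else 0) := by
    rw [Finset.mul_sum]
    refine Fintype.sum_equiv (Equiv.mulRight (permL hn (τ⁻¹))) _ _ (fun π => ?_)
    simp only [Equiv.coe_mulRight]
    simp only [tl_mul_permL, hd_mul_permL]
    have hs : sgn (π * permL hn (τ⁻¹)) = sgn π * sgn' τ := by
      simp [sgn, sgn', sign_permL]
    rw [hs]
    have hc : (x ∘ τ = hd hn π) ↔ (x = hd hn π ∘ (τ⁻¹ : Perm (Fin n))) := by
      constructor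
      · intro h; funext k; have := congrFun h ((τ⁻¹ : Perm (Fin n)) k); simpa using this
      · intro h; funext k; have := congrFun h (τ k); simpa using this
    rw [if_congr hc rfl rfl]
    exact sq_helper (sgn' τ) (sgn π) _ (sgn'_sq τ)
  rw [key]
  show _ = sgn' τ * _
  ring

lemma applyA_preim (w : EuclideanSpace ℂ (Fin (d - n) → Fin d))
    (hw : w ∈ antisymE d (d - n)) : applyA d n hn (preim hn w) = w := by
  refine PiLp.ext fun y => ?_
  have hdval : ∀ π : Equiv.Perm (Fin d), preim hn w (hd hn π)
      = (cc d n)⁻¹ * (((d - n).factorial : ℂ) * (sgn π * w (tl hn π))) := by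
    intro π
    rw [preim_apply]
    congr 1
    calc ∑ π' : Equiv.Perm (Fin d), sgn π' * (if hd hn π = hd hn π' then w (tl hn π') else 0)
        = ∑ π' : Equiv.Perm (Fin d), (if hd hn π = hd hn π' then sgn π' * w (tl hn π') else 0) := by
          refine Finset.sum_congr rfl fun π' _ => ?_
          rw [mul_ite, mul_zero]
      _ = ∑ σ : Equiv.Perm (Fin (d - n)), sgn (π * permR hn σ) * w (tl hn (π * permR hn σ)) :=
          fiberR hn π (fun π' => sgn π' * w (tl hn π'))
      _ = ∑ σ : Equiv.Perm (Fin (d - n)), sgn π * w (tl hn π) := by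
          refine Finset.sum_congr rfl fun σ _ => ?_
          rw [tl_mul_permR]
          have hwv : w (tl hn π ∘ σ) = sgn' σ * w (tl hn π) := by
            have := congrFun (hw σ) (tl hn π)
            simpa [PiLp.smul_apply, smul_eq_mul, sgn'] using this
          have hsg : sgn (π * permR hn σ) = sgn π * sgn' σ := by
            simp [sgn, sgn', sign_permR]
          rw [hwv, hsg]
          exact sq_helper3 (sgn' σ) (sgn π) _ (sgn'_sq σ)
      _ = ((d - n).factorial : ℂ) * (sgn π * w (tl hn π)) := by
          rw [Finset.sum_const, Finset.card_univ, Fintype.card_perm, Fintype.card_fin,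
            nsmul_eq_mul]
  show applyA d n hn (preim hn w) y = w y
  rw [applyA_apply' hn]
  have step1 : ∑ π : Equiv.Perm (Fin d), sgn π * (if y = tl hn π then preim hn w (hd hn π) else 0)
      = ∑ π : Equiv.Perm (Fin d),
        ((cc d n)⁻¹ * ((d - n).factorial : ℂ)) * (if y = tl hn π then w y else 0) := by
    refine Finset.sum_congr rfl fun π _ => ?_
    by_cases h : y = tl hn π
    · rw [if_pos h, if_pos h, hdval π, ← h]
      have h2 : sgn π * ((cc d n)⁻¹ * (((d - n).factorial : ℂ) * (sgn π * w y)))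
          = (sgn π * sgn π) * ((cc d n)⁻¹ * (((d - n).factorial : ℂ) * w y)) := by ring
      rw [h2, sgn_sq, one_mul]
      ring
    · rw [if_neg h, if_neg h, mul_zero, mul_zero]
  have step2 : ∑ π : Equiv.Perm (Fin d),
        ((cc d n)⁻¹ * ((d - n).factorial : ℂ)) * (if y = tl hn π then w y else 0)
      = ((cc d n)⁻¹ * ((d - n).factorial : ℂ)) *
        (w y * ∑ π : Equiv.Perm (Fin d), (if y = tl hn π then (1 : ℂ) else 0)) := by
    rw [Finset.mul_sum, Finset.mul_sum]
    refine Finset.sum_congr rfl fun π _ => ?_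
    by_cases h : y = tl hn π <;> simp [h]
  rw [step1, step2]
  by_cases hwy : w y = 0
  · rw [hwy, zero_mul, mul_zero, mul_zero]
  · have hyinj : Function.Injective y := by
      by_contra hni
      exact hwy (antisym_vanish hw hni)
    rw [count_tl hn y hyinj]
    have h1 := cc_helper (d := d) (n := n)
    calc (cc d n)⁻¹ * ((cc d n)⁻¹ * ((d - n).factorial : ℂ) * (w y * (n.factorial : ℂ)))
        = ((cc d n)⁻¹ * (cc d n)⁻¹ * ((n.factorial : ℂ) * ((d - n).factorial : ℂ))) * w y := by
          ring
      _ = w y := by rw [h1, one_mul]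

end surj

/-- `A_n` restricted to the antisymmetric subspace `Λⁿ(H)` of `H^{⊗n}` is a
surjective isometry onto the antisymmetric subspace `Λ^{d-n}(H)` of `H^{⊗(d-n)}`, and it
annihilates the orthogonal complement of `Λⁿ(H)`. -/
theorem stmt5 (d n : ℕ) (h0 : 0 < n) (hnd : n < d) (hn : n ≤ d) :
    (∀ v ∈ antisymE d n, applyA d n hn v ∈ antisymE d (d - n)) ∧
    (∀ v ∈ antisymE d n, ‖applyA d n hn v‖ = ‖v‖) ∧
    (∀ w ∈ antisymE d (d - n), ∃ v ∈ antisymE d n, applyA d n hn v = w) ∧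
    (∀ v ∈ (antisymE d n)ᗮ, applyA d n hn v = 0) := by
  refine ⟨?_, ?_, ?_, ?_⟩
  · -- (1) antisymmetry of the image
    intro v _
    rw [mem_antisymE]
    intro σ
    funext y
    simp only [PiLp.smul_apply, Pi.smul_apply, smul_eq_mul]
    show applyA d n hn v (y ∘ σ) = ((Equiv.Perm.sign σ : ℤ) : ℂ) * applyA d n hn v y
    rw [applyA_comp_row hn v σ y]
    rfl
  · -- (2) isometry on the antisymmetric subspace
    intro v hv
    have hsum := main_norm_sum hn v hv
    have h4 : ∀ z : ℂ, (starRingEnd ℂ) z * z = ((‖z‖ ^ 2 : ℝ) : ℂ) := fun z => by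
      rw [mul_comm, Complex.mul_conj, Complex.normSq_eq_norm_sq]
    simp only [h4] at hsum
    have h3 : ∑ y : Fin (d - n) → Fin d, ‖applyA d n hn v y‖ ^ 2
        = ∑ x : Fin n → Fin d, ‖v x‖ ^ 2 := by exact_mod_cast hsum
    rw [EuclideanSpace.norm_eq, EuclideanSpace.norm_eq, h3]
  · -- (3) surjectivity onto the antisymmetric subspace
    intro w hw
    exact ⟨preim hn w, preim_mem hn w, applyA_preim hn w hw⟩
  · -- (4) annihilates the orthogonal complement
    intro v hv
    refine PiLp.ext fun y => ?_
    show applyA d n hn v y = 0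
    set u : EuclideanSpace ℂ (Fin n → Fin d) :=
      WithLp.toLp 2 (fun x => (starRingEnd ℂ) (matA d n hn y x)) with hu
    have humem : u ∈ antisymE d n := by
      rw [mem_antisymE]
      intro τ
      funext x
      simp only [PiLp.smul_apply, Pi.smul_apply, smul_eq_mul]
      show (starRingEnd ℂ) (matA d n hn y (x ∘ τ)) = ((Equiv.Perm.sign τ : ℤ) : ℂ) * u x
      rw [matA_comp_col hn y x τ, map_mul]
      congr 1
      simp [sgn']
    have horth : inner ℂ u v = 0 := (Submodule.mem_orthogonal _ v).mp hv u humem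
    have hinner : inner ℂ u v = ∑ x : Fin n → Fin d, matA d n hn y x * v x := by
      rw [PiLp.inner_apply]
      refine Finset.sum_congr rfl fun x _ => ?_
      rw [RCLike.inner_apply']
      show (starRingEnd ℂ) ((starRingEnd ℂ) (matA d n hn y x)) * v x = _
      rw [Complex.conj_conj]
    have happ : applyA d n hn v y = ∑ x : Fin n → Fin d, matA d n hn y x * v x := rfl
    rw [happ, ← hinner, horth]
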